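/- Let α > −1 be a real number, n ∈ ℕ, and j ∈ ℕ. For all x, y ∈ ℝ with x ≠ y, the j-th partial derivative of the Laguerre kernel with respect to its second variable satisfies (∂^j/∂y^j) K_n^α(x,y) = ((n+1)!·j!/Γ(α+n+1)) · (L_n^α(x)·T_j[L_{n+1}^α; y](x) − L_{n+1}^α(x)·T_j[L_n^α; y](x)) / (x − y)^{j+1}, where T_j[f; y](x) = Σ_{k=0}^j (f^{(k)}(y)/k!)(x − y)^k is the Taylor polynomial of f of degree j centered at y. -/

import Mathlib

open Polynomial Finset MeasureTheory Real

/-- The generalized Laguerre polynomial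
`L_n^α(x) = Σ_{k=0}^n (−1)^k ((α+k+1)_{n−k} / ((n−k)!·k!)) x^k`. -/
noncomputable def laguerre (α : ℝ) (n : ℕ) : Polynomial ℝ :=
  ∑ k ∈ Finset.range (n + 1),
    Polynomial.C ((-1 : ℝ) ^ k * (ascPochhammer ℝ (n - k)).eval (α + k + 1) /
      ((n - k).factorial * k.factorial)) * Polynomial.X ^ k


/-- The `n`-th Laguerre reproducing kernel
`K_n^α(x,y) = Σ_{k=0}^n (k!/Γ(α+k+1)) L_k^α(x) L_k^α(y)`. -/
noncomputable def laguerreKernel (α : ℝ) (n : ℕ) (x y : ℝ) : ℝ :=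
  ∑ k ∈ Finset.range (n + 1),
    (k.factorial : ℝ) / Real.Gamma (α + k + 1) * (laguerre α k).eval x * (laguerre α k).eval y

/-- `T_j[f; y](x) = Σ_{k=0}^j (f^{(k)}(y)/k!)(x − y)^k`, the degree-`j` Taylor polynomial of
the polynomial `f` centered at `y`, evaluated at `x`. -/
noncomputable def taylorEval (f : Polynomial ℝ) (j : ℕ) (y x : ℝ) : ℝ :=
  ∑ k ∈ Finset.range (j + 1),
    (Polynomial.derivative^[k] f).eval y / k.factorial * (x - y) ^ k

lemma laguerre_coeff (α : ℝ) (n m : ℕ) :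
    (laguerre α n).coeff m = if m ≤ n then
      (-1 : ℝ) ^ m * (ascPochhammer ℝ (n - m)).eval (α + m + 1) /
        ((n - m).factorial * m.factorial) else 0 := by
  rw [laguerre, Polynomial.finset_sum_coeff]
  simp only [Polynomial.coeff_C_mul, Polynomial.coeff_X_pow, mul_ite, mul_one, mul_zero]
  rw [Finset.sum_ite_eq (Finset.range (n+1)) m]
  simp [Nat.lt_succ_iff]

lemma ascPochhammer_eval_succ_left (m : ℕ) (a : ℝ) :
    (ascPochhammer ℝ (m+1)).eval a = a * (ascPochhammer ℝ m).eval (a+1) := by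
  rw [ascPochhammer_succ_left]
  simp [eval_comp]

lemma laguerre_rec (α : ℝ) (n : ℕ) :
    C ((n : ℝ) + 2) * laguerre α (n+2)
      = (C (2*(n:ℝ)+3+α) - X) * laguerre α (n+1) - C ((n:ℝ)+1+α) * laguerre α n := by
  ext m
  rw [sub_mul, coeff_sub, coeff_sub, coeff_C_mul, coeff_C_mul, coeff_C_mul]
  cases m with
  | zero =>
    rw [mul_coeff_zero, coeff_X_zero, zero_mul]
    rw [laguerre_coeff, laguerre_coeff, laguerre_coeff]
    simp only [Nat.zero_le, if_true, Nat.sub_zero, Nat.factorial_zero, pow_zero]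
    rw [show n+2 = (n+1)+1 from rfl, ascPochhammer_succ_eval, ascPochhammer_succ_eval]
    have h0 : ((n+1).factorial : ℝ) ≠ 0 := Nat.cast_ne_zero.mpr (Nat.factorial_ne_zero _)
    have h1 : ((n+2).factorial : ℝ) ≠ 0 := Nat.cast_ne_zero.mpr (Nat.factorial_ne_zero _)
    have h2 : ((n).factorial : ℝ) ≠ 0 := Nat.cast_ne_zero.mpr (Nat.factorial_ne_zero _)
    rw [show (n+2).factorial = (n+2)*((n+1)*n.factorial) from by
      rw [Nat.factorial_succ, Nat.factorial_succ], show (n+1).factorial = (n+1)*n.factorial from Nat.factorial_succ n]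
    push_cast
    field_simp
    ring
  | succ m =>
    rw [coeff_X_mul]
    rw [laguerre_coeff, laguerre_coeff, laguerre_coeff, laguerre_coeff]
    rcases le_or_gt (m+1) n with hmn | hmn
    · -- generic case
      obtain ⟨l, rfl⟩ : ∃ l, n = (m+1) + l := ⟨n - (m+1), by omega⟩
      have e1 : (m+1)+l+2 - (m+1) = l+2 := by omega
      have e2 : (m+1)+l+1 - (m+1) = l+1 := by omega
      have e3 : (m+1)+l - (m+1) = l := by omega
      have e4 : (m+1)+l+1 - m = l+2 := by omega
      rw [e1, e2, e3, e4]
      simp only [show m+1 ≤ (m+1)+l+2 from by omega, show m+1 ≤ (m+1)+l+1 from by omega,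
        show m+1 ≤ (m+1)+l from by omega, show m ≤ (m+1)+l+1 from by omega, if_true]
      rw [show l+2 = (l+1)+1 from rfl, ascPochhammer_succ_eval, ascPochhammer_succ_eval]
      rw [ascPochhammer_eval_succ_left (l+1), ascPochhammer_succ_eval]
      have hl0 : ((l).factorial : ℝ) ≠ 0 := Nat.cast_ne_zero.mpr (Nat.factorial_ne_zero _)
      have hm0 : ((m).factorial : ℝ) ≠ 0 := Nat.cast_ne_zero.mpr (Nat.factorial_ne_zero _)
      have hm1 : ((m+1).factorial : ℝ) ≠ 0 := Nat.cast_ne_zero.mpr (Nat.factorial_ne_zero _)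
      rw [show (l+2).factorial = (l+2)*((l+1)*l.factorial) from by
        rw [Nat.factorial_succ, Nat.factorial_succ],
        show (l+1).factorial = (l+1)*l.factorial from Nat.factorial_succ l,
        show (m+1).factorial = (m+1)*m.factorial from Nat.factorial_succ m]
      rw [show α + ↑m + 1 + 1 = α + ↑(m+1) + 1 from by push_cast; ring]
      push_cast
      field_simp
      ring
    · rcases le_or_gt (m+1) (n+2) with hmn2 | hmn2
      · rcases Nat.eq_or_lt_of_le hmn2 with heq | hlt
        · -- m+1 = n+2, i.e. m = n+1
          obtain rfl : m = n+1 := by omega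
          simp only [show ¬ (n+1+1 ≤ n+1) from by omega, show ¬ (n+1+1 ≤ n) from by omega,
            le_refl, if_true, if_false, show n+1 ≤ n+1+1 from by omega]
          rw [show n+2 - (n+2) = 0 from by omega, show n+1 - (n+1) = 0 from by omega]
          simp only [ascPochhammer_zero, eval_one, Nat.factorial_zero]
          have hm1 : ((n+1).factorial : ℝ) ≠ 0 := Nat.cast_ne_zero.mpr (Nat.factorial_ne_zero _)
          rw [show (n+2).factorial = (n+2)*(n+1).factorial from Nat.factorial_succ _]
          push_cast
          field_simp
          ring
        · -- m+1 = n+1, i.e. m = n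
          obtain rfl : m = n := by omega
          simp only [show m+1 ≤ m+2 from by omega, show m+1 ≤ m+1 from le_refl _,
            show ¬ (m+1 ≤ m) from by omega, show m ≤ m+1 from by omega, if_true, if_false]
          rw [show m+2 - (m+1) = 1 from by omega, show m+1 - (m+1) = 0 from by omega,
            show m+1 - m = 1 from by omega]
          simp only [ascPochhammer_zero, ascPochhammer_one, eval_one, eval_X,
            Nat.factorial_zero, Nat.factorial_one]
          have hm0 : ((m).factorial : ℝ) ≠ 0 := Nat.cast_ne_zero.mpr (Nat.factorial_ne_zero _)
          have hm1 : ((m+1).factorial : ℝ) ≠ 0 := Nat.cast_ne_zero.mpr (Nat.factorial_ne_zero _)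
          rw [show (m+1).factorial = (m+1)*m.factorial from Nat.factorial_succ m]
          push_cast
          field_simp
          ring
      · -- m+1 > n+2 : all zero
        simp only [show ¬ (m+1 ≤ n+2) from by omega, show ¬ (m+1 ≤ n+1) from by omega,
          show ¬ (m+1 ≤ n) from by omega, show ¬ (m ≤ n+1) from by omega, if_false]
        ring

lemma laguerre_rec_eval (α : ℝ) (n : ℕ) (t : ℝ) :
    ((n : ℝ) + 2) * (laguerre α (n+2)).eval t
      = (2*(n:ℝ)+3+α-t) * (laguerre α (n+1)).eval t - ((n:ℝ)+1+α) * (laguerre α n).eval t := by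
  have := congrArg (Polynomial.eval t) (laguerre_rec α n)
  simpa using this

lemma laguerre_cd (α : ℝ) (hα : -1 < α) (n : ℕ) (x y : ℝ) :
    (x - y) * laguerreKernel α n x y
      = ((n+1).factorial : ℝ) / Real.Gamma (α + n + 1) *
        ((laguerre α n).eval x * (laguerre α (n+1)).eval y
          - (laguerre α (n+1)).eval x * (laguerre α n).eval y) := by
  induction n with
  | zero =>
    simp only [laguerreKernel, laguerre, Finset.sum_range_succ, Finset.sum_range_zero]
    norm_num [ascPochhammer_zero, ascPochhammer_one]
    ring
  | succ n ih =>
    have hpos : (0:ℝ) < α + n + 1 := by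
      have : (0:ℝ) ≤ n := Nat.cast_nonneg n
      linarith
    have hΓpos : 0 < Real.Gamma (α + n + 1) := Real.Gamma_pos_of_pos hpos
    have hΓne : Real.Gamma (α + n + 1) ≠ 0 := ne_of_gt hΓpos
    have hΓrec : Real.Gamma (α + ((n+1:ℕ):ℝ) + 1) = (α + n + 1) * Real.Gamma (α + n + 1) := by
      push_cast
      rw [show α + (↑n+1) + 1 = (α + ↑n + 1) + 1 from by ring]
      exact Real.Gamma_add_one (ne_of_gt hpos)
    have hx := laguerre_rec_eval α n x
    have hy := laguerre_rec_eval α n y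
    have key : ((n:ℝ)+2) * ((laguerre α (n+1)).eval x * (laguerre α (n+2)).eval y
          - (laguerre α (n+2)).eval x * (laguerre α (n+1)).eval y)
        = (x-y) * ((laguerre α (n+1)).eval x * (laguerre α (n+1)).eval y)
          + (α+n+1) * ((laguerre α n).eval x * (laguerre α (n+1)).eval y
            - (laguerre α (n+1)).eval x * (laguerre α n).eval y) := by
      linear_combination (laguerre α (n+1)).eval x * hy - (laguerre α (n+1)).eval y * hx
    have hK : laguerreKernel α (n+1) x y = laguerreKernel α n x y
        + ((n+1).factorial : ℝ) / Real.Gamma (α + ((n+1:ℕ):ℝ) + 1)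
          * (laguerre α (n+1)).eval x * (laguerre α (n+1)).eval y := by
      rw [laguerreKernel, Finset.sum_range_succ]; rfl
    rw [hK, hΓrec]
    rw [show ((n:ℕ)+1+1 : ℕ) = n+2 from rfl]
    rw [show (((n+1)+1).factorial : ℝ) = ((n:ℝ)+2) * (n+1).factorial from by
      rw [Nat.factorial_succ]; push_cast; ring]
    have h2 : ((n:ℝ)+2) * ((n+1).factorial : ℝ) / ((α + n + 1) * Real.Gamma (α + n + 1))
          * ((laguerre α (n+1)).eval x * (laguerre α (n+2)).eval y
            - (laguerre α (n+2)).eval x * (laguerre α (n+1)).eval y)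
        = ((n+1).factorial : ℝ) / ((α + n + 1) * Real.Gamma (α + n + 1))
          * (((n:ℝ)+2) * ((laguerre α (n+1)).eval x * (laguerre α (n+2)).eval y
            - (laguerre α (n+2)).eval x * (laguerre α (n+1)).eval y)) := by ring
    rw [mul_add, ih, h2, key]
    field_simp
    ring

lemma taylorEval_zero (f : Polynomial ℝ) (y x : ℝ) : taylorEval f 0 y x = f.eval y := by
  simp [taylorEval]

lemma taylorEval_succ (f : Polynomial ℝ) (j : ℕ) (y x : ℝ) :
    taylorEval f (j+1) y x = taylorEval f j y x
      + (Polynomial.derivative^[j+1] f).eval y / (j+1).factorial * (x - y) ^ (j+1) := by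
  rw [taylorEval, Finset.sum_range_succ]; rfl

lemma hasDerivAt_sub_pow (x : ℝ) (m : ℕ) (y : ℝ) :
    HasDerivAt (fun t => (x - t) ^ (m+1)) (((m:ℝ)+1) * (x-y)^m * (-1)) y := by
  have h : HasDerivAt (fun t : ℝ => x - t) (-1) y := by
    simpa using (hasDerivAt_id y).const_sub x
  simpa using h.fun_pow (m+1)

lemma hasDerivAt_taylorEval (f : Polynomial ℝ) (x : ℝ) (j : ℕ) (y : ℝ) :
    HasDerivAt (fun t => taylorEval f j t x)
      ((Polynomial.derivative^[j+1] f).eval y / j.factorial * (x - y) ^ j) y := by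
  induction j with
  | zero =>
    have := (Polynomial.derivative^[0] f).hasDerivAt (𝕜 := ℝ) y
    simp only [Function.iterate_zero, id_eq] at this
    have h2 : HasDerivAt (fun t => taylorEval f 0 t x) ((Polynomial.derivative f).eval y) y := by
      refine this.congr_of_eventuallyEq ?_
      filter_upwards with t using (taylorEval_zero f t x)
    simpa [Function.iterate_succ_apply'] using h2
  | succ j ih =>
    have h1 : HasDerivAt (fun t => (Polynomial.derivative^[j+1] f).eval t)
        ((Polynomial.derivative^[j+2] f).eval y) y := by
      have := (Polynomial.derivative^[j+1] f).hasDerivAt (𝕜 := ℝ) y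
      rwa [← Function.iterate_succ_apply' Polynomial.derivative (j+1)] at this
    have hterm := (h1.div_const ((j+1).factorial : ℝ)).mul (hasDerivAt_sub_pow x j y)
    have hsum := ih.add hterm
    have heq : HasDerivAt (fun t => taylorEval f (j+1) t x)
        (((Polynomial.derivative^[j+1] f).eval y / (j.factorial:ℝ) * (x - y) ^ j)
          + ((Polynomial.derivative^[j+2] f).eval y / ((j+1).factorial:ℝ) * (x-y)^(j+1)
            + (Polynomial.derivative^[j+1] f).eval y / ((j+1).factorial:ℝ)
              * (((j:ℝ)+1) * (x-y)^j * (-1)))) y := by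
      refine hsum.congr_of_eventuallyEq ?_
      filter_upwards with t using (taylorEval_succ f j t x)
    have harith : (((Polynomial.derivative^[j+1] f).eval y / (j.factorial:ℝ) * (x - y) ^ j)
          + ((Polynomial.derivative^[j+2] f).eval y / ((j+1).factorial:ℝ) * (x-y)^(j+1)
            + (Polynomial.derivative^[j+1] f).eval y / ((j+1).factorial:ℝ)
              * (((j:ℝ)+1) * (x-y)^j * (-1))))
        = (Polynomial.derivative^[j+1+1] f).eval y / ((j+1).factorial:ℝ) * (x - y) ^ (j+1) := by
      have hjf : ((j+1).factorial : ℝ) = ((j:ℝ)+1) * j.factorial := by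
        rw [Nat.factorial_succ]; push_cast; ring
      have h0 : (j.factorial : ℝ) ≠ 0 := Nat.cast_ne_zero.mpr (Nat.factorial_ne_zero _)
      have h1 : ((j:ℝ)+1) ≠ 0 := by positivity
      rw [hjf]
      field_simp
      ring
    rw [harith] at heq
    exact heq

lemma laguerre_kernel_aux (α : ℝ) (hα : -1 < α) (n : ℕ) (x : ℝ) : ∀ j : ℕ, ∀ y : ℝ, x ≠ y →
    iteratedDeriv j (fun t => laguerreKernel α n x t) y
      = ((n + 1).factorial : ℝ) * j.factorial / Real.Gamma (α + n + 1) *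
          ((laguerre α n).eval x * taylorEval (laguerre α (n + 1)) j y x
            - (laguerre α (n + 1)).eval x * taylorEval (laguerre α n) j y x)
          / (x - y) ^ (j + 1) := by
  intro j
  induction j with
  | zero =>
    intro y hxy
    have hne : (x - y) ≠ 0 := sub_ne_zero.mpr hxy
    rw [iteratedDeriv_zero, taylorEval_zero, taylorEval_zero]
    rw [eq_div_iff (pow_ne_zero _ hne), pow_one]
    have hcd := laguerre_cd α hα n x y
    rw [show ((0:ℕ).factorial : ℝ) = 1 from by norm_num]
    linear_combination hcd
  | succ j ih =>
    intro y hxy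
    have hne : (x - y) ≠ 0 := sub_ne_zero.mpr hxy
    rw [iteratedDeriv_succ]
    have hev : iteratedDeriv j (fun t => laguerreKernel α n x t)
        =ᶠ[nhds y] fun t => ((n + 1).factorial : ℝ) * j.factorial / Real.Gamma (α + n + 1) *
          ((laguerre α n).eval x * taylorEval (laguerre α (n + 1)) j t x
            - (laguerre α (n + 1)).eval x * taylorEval (laguerre α n) j t x)
          / (x - t) ^ (j + 1) := by
      filter_upwards [isOpen_ne.mem_nhds (Ne.symm hxy : y ≠ x)] with t ht
      exact ih t (Ne.symm ht)
    rw [hev.deriv_eq]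
    have h1 := hasDerivAt_taylorEval (laguerre α (n+1)) x j y
    have h2 := hasDerivAt_taylorEval (laguerre α n) x j y
    have hnum := ((h1.const_mul ((laguerre α n).eval x)).fun_sub
        (h2.const_mul ((laguerre α (n+1)).eval x))).const_mul
        (((n + 1).factorial : ℝ) * (j.factorial : ℝ) / Real.Gamma (α + n + 1))
    have hq := hnum.fun_div (hasDerivAt_sub_pow x j y) (pow_ne_zero _ hne)
    rw [hq.deriv]
    have hΓne : Real.Gamma (α + n + 1) ≠ 0 := by
      refine ne_of_gt (Real.Gamma_pos_of_pos ?_)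
      have : (0:ℝ) ≤ n := Nat.cast_nonneg n
      linarith
    have hjf : ((j+1).factorial : ℝ) = ((j:ℝ)+1) * j.factorial := by
      rw [Nat.factorial_succ]; push_cast; ring
    have h0 : (j.factorial : ℝ) ≠ 0 := Nat.cast_ne_zero.mpr (Nat.factorial_ne_zero _)
    rw [taylorEval_succ, taylorEval_succ, hjf]
    field_simp
    ring

theorem laguerre_kernel_partial_derivative (α : ℝ) (hα : -1 < α) (n j : ℕ)
    (x y : ℝ) (hxy : x ≠ y) :
    iteratedDeriv j (fun t => laguerreKernel α n x t) y
      = ((n + 1).factorial : ℝ) * j.factorial / Real.Gamma (α + n + 1) *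
          ((laguerre α n).eval x * taylorEval (laguerre α (n + 1)) j y x
            - (laguerre α (n + 1)).eval x * taylorEval (laguerre α n) j y x)
          / (x - y) ^ (j + 1) := by
  exact laguerre_kernel_aux α hα n x j y hxy
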